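/- Let a, b ∈ ℍ be nonzero, E, D ∈ ℝ and J ∈ ℍ. Then for every z ∈ ℍ: z ∈ S(E, J, D) if and only if a * z * b ∈ S(E, a * J * b, ‖a‖² * ‖b‖² * D). In particular the maps z ↦ a z b carry hyperspheres and real hyperplanes of ℍ to hyperspheres and real hyperplanes. (The rotation–dilation case of the paper's Theorem 2.33.) -/
import Mathlib


open scoped Quaternion

/-- The hypersphere (`E ≠ 0`) or real hyperplane (`E = 0`) of `ℍ ≅ ℝ⁴` with
equation `E * ‖z‖² + 2 * re (J * star z) + D = 0`. -/
def Ssphere (E : ℝ) (J : ℍ[ℝ]) (D : ℝ) : Set ℍ[ℝ] :=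
  {z : ℍ[ℝ] | E * ‖z‖ ^ 2 + 2 * (J * star z).re + D = 0}

lemma re_mul_comm (x y : ℍ[ℝ]) : (x * y).re = (y * x).re := by
  simp [Quaternion.re_mul]; ring

lemma key_re (a b J z : ℍ[ℝ]) :
    ((a * J * b) * star (a * z * b)).re = ‖a‖ ^ 2 * ‖b‖ ^ 2 * (J * star z).re := by
  have h1 : (a * J * b) * star (a * z * b)
      = a * (J * (b * star b) * star z) * star a := by
    simp only [star_mul, mul_assoc]
  rw [h1, re_mul_comm, ← mul_assoc, ← mul_assoc, Quaternion.star_mul_self,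
    Quaternion.self_mul_star]
  simp [Quaternion.normSq_eq_norm_mul_self, Quaternion.coe_mul_eq_smul, sq]
  ring

/-- Rotation–dilation case of the paper's Theorem 2.33: the maps `z ↦ a z b` carry
hyperspheres and real hyperplanes to hyperspheres and real hyperplanes. -/
theorem stmt_7 (a b : ℍ[ℝ]) (ha : a ≠ 0) (hb : b ≠ 0) (E D : ℝ) (J : ℍ[ℝ]) :
    ∀ z : ℍ[ℝ], z ∈ Ssphere E J D ↔
      a * z * b ∈ Ssphere E (a * J * b) (‖a‖ ^ 2 * ‖b‖ ^ 2 * D) := by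
  intro z
  simp only [Ssphere, Set.mem_setOf_eq]
  have hn : ‖a * z * b‖ ^ 2 = ‖a‖ ^ 2 * ‖z‖ ^ 2 * ‖b‖ ^ 2 := by
    simp [norm_mul]; ring
  rw [hn, key_re]
  have ha' : ‖a‖ ≠ 0 := norm_ne_zero_iff.mpr ha
  have hb' : ‖b‖ ≠ 0 := norm_ne_zero_iff.mpr hb
  have hpos : (0:ℝ) < ‖a‖ ^ 2 * ‖b‖ ^ 2 := by positivity
  constructor
  · intro h; nlinarith [h]
  · intro h
    have : ‖a‖ ^ 2 * ‖b‖ ^ 2 * (E * ‖z‖ ^ 2 + 2 * (J * star z).re + D) = 0 := by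
      nlinarith [h]
    rcases mul_eq_zero.mp this with h0 | h0
    · exact absurd h0 hpos.ne'
    · exact h0
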